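/- There exists an absolute constant C > 0 with the following property. Let n ≥ k ≥ 1, let V• ∈ ℝ^{n×k} have orthonormal columns, and let Δ, Δ̃ ∈ ℝ^{n×k} satisfy V•ᵀΔ = 0 and V•ᵀΔ̃ = 0, with Δ of full column rank (so its smallest singular value σ_k(Δ) is positive). Choose any thin SVDs Δ = U ξ Wᵀ and Δ̃ = Ũ ξ̃ W̃ᵀ, and set V = V• W cos(ξ) Wᵀ + U sin(ξ) Wᵀ and Ṽ = V• W̃ cos(ξ̃) W̃ᵀ + Ũ sin(ξ̃) W̃ᵀ (the Grassmann exponentials of Δ and Δ̃ at base point V•). Then ‖V − Ṽ‖_F ≤ (8C/σ_k(Δ) + 2) · ‖Δ − Δ̃‖_F. -/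
import Mathlib


open Matrix

/-- The Frobenius norm of a real matrix. -/
noncomputable def frobNorm {m n : ℕ} (A : Matrix (Fin m) (Fin n) ℝ) : ℝ :=
  Real.sqrt (∑ i, ∑ j, A i j ^ 2)

section Helpers

lemma sum_sq_eq_trace {m k : ℕ} (X : Matrix (Fin m) (Fin k) ℝ) :
    ∑ i, ∑ j, X i j ^ 2 = Matrix.trace (Xᵀ * X) := by
  simp only [Matrix.trace, Matrix.diag, Matrix.mul_apply, Matrix.transpose_apply, sq]
  exact Finset.sum_comm

lemma frob_eq_trace {m k : ℕ} (X : Matrix (Fin m) (Fin k) ℝ) :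
    frobNorm X = Real.sqrt (Matrix.trace (Xᵀ * X)) := by
  rw [frobNorm, sum_sq_eq_trace]

lemma trace_sub_sq {m k : ℕ} (X Y : Matrix (Fin m) (Fin k) ℝ) :
    Matrix.trace ((X - Y)ᵀ * (X - Y))
      = Matrix.trace (Xᵀ * X) - 2 * Matrix.trace (Xᵀ * Y) + Matrix.trace (Yᵀ * Y) := by
  have h : Matrix.trace (Yᵀ * X) = Matrix.trace (Xᵀ * Y) := by
    rw [← Matrix.trace_transpose (Yᵀ * X), Matrix.transpose_mul, Matrix.transpose_transpose]
  rw [Matrix.transpose_sub, Matrix.sub_mul, Matrix.mul_sub, Matrix.mul_sub,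
    Matrix.trace_sub, Matrix.trace_sub, Matrix.trace_sub, h]
  ring

lemma trace_form {m k : ℕ} (U U' : Matrix (Fin m) (Fin k) ℝ) (W W' : Matrix (Fin k) (Fin k) ℝ)
    (f g : Fin k → ℝ) :
    Matrix.trace ((U * Matrix.diagonal f * Wᵀ)ᵀ * (U' * Matrix.diagonal g * W'ᵀ))
      = ∑ i, ∑ j, f i * g j * ((Uᵀ * U') i j * (Wᵀ * W') i j) := by
  set M : Matrix (Fin k) (Fin k) ℝ := Matrix.diagonal f * (Uᵀ * U') * Matrix.diagonal g with hM
  have h1 : (U * Matrix.diagonal f * Wᵀ)ᵀ = W * (Matrix.diagonal f * Uᵀ) := by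
    rw [Matrix.transpose_mul, Matrix.transpose_mul, Matrix.transpose_transpose,
      Matrix.diagonal_transpose]
  have h2 : W * (Matrix.diagonal f * Uᵀ) * (U' * Matrix.diagonal g * W'ᵀ)
      = W * M * W'ᵀ := by
    rw [hM]; simp only [Matrix.mul_assoc]
  have h3 : W'ᵀ * W = (Wᵀ * W')ᵀ := by
    rw [Matrix.transpose_mul, Matrix.transpose_transpose]
  rw [h1, h2, Matrix.trace_mul_cycle, h3]
  have h4 : ∀ i j, M i j = f i * (Uᵀ * U') i j * g j := by
    intro i j
    rw [hM, Matrix.mul_diagonal, Matrix.diagonal_mul]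
  have h5 : Matrix.trace ((Wᵀ * W')ᵀ * M) = ∑ j, ∑ i, (Wᵀ * W') i j * M i j := by
    simp only [Matrix.trace, Matrix.diag, Matrix.mul_apply, Matrix.transpose_apply]
  rw [h5, Finset.sum_comm]
  refine Finset.sum_congr rfl fun i _ => Finset.sum_congr rfl fun j _ => ?_
  rw [h4]; ring

lemma sum_one_diag {k : ℕ} (f g : Fin k → ℝ) :
    ∑ i, ∑ j, f i * g j * ((1 : Matrix (Fin k) (Fin k) ℝ) i j
        * (1 : Matrix (Fin k) (Fin k) ℝ) i j)
      = ∑ i, f i * g i := by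
  refine Finset.sum_congr rfl fun i _ => ?_
  rw [Finset.sum_eq_single i]
  · simp [Matrix.one_apply]
  · intro j _ hji
    simp [Matrix.one_apply, Ne.symm hji]
  · simp

lemma sin_sub_sq (x y : ℝ) : (Real.sin x - Real.sin y) ^ 2 ≤ (x - y) ^ 2 := by
  rw [Real.sin_sub_sin]
  have h1 := @Real.sin_sq_le_sq ((x - y) / 2)
  have h2 := @Real.cos_sq_le_one ((x + y) / 2)
  have h3 := sq_nonneg (Real.sin ((x - y) / 2))
  nlinarith [mul_le_mul_of_nonneg_left h2 h3]

lemma sin_add_sq (x y : ℝ) : (Real.sin x + Real.sin y) ^ 2 ≤ (x + y) ^ 2 := by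
  have := sin_sub_sq x (-y)
  simpa [Real.sin_neg, sub_neg_eq_add] using this

lemma cos_sub_sq (x y : ℝ) : (Real.cos x - Real.cos y) ^ 2 ≤ (x - y) ^ 2 := by
  rw [Real.cos_sub_cos]
  have h1 := @Real.sin_sq_le_sq ((x - y) / 2)
  have h2 := @Real.sin_sq_le_one ((x + y) / 2)
  have h3 := sq_nonneg (Real.sin ((x - y) / 2))
  nlinarith [mul_le_mul_of_nonneg_left h2 h3]

lemma cos_sub_sq' (x y : ℝ) : (Real.cos x - Real.cos y) ^ 2 ≤ (x + y) ^ 2 := by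
  have := cos_sub_sq x (-y)
  simpa [Real.cos_neg, sub_neg_eq_add] using this

lemma sin_sq_le (x : ℝ) : Real.sin x ^ 2 ≤ x ^ 2 := @Real.sin_sq_le_sq x

lemma key_identity {k : ℕ} (A B : Matrix (Fin k) (Fin k) ℝ)
    (hBrow : ∀ i, ∑ j, B i j ^ 2 = 1) (hBcol : ∀ j, ∑ i, B i j ^ 2 = 1)
    (f g : Fin k → ℝ) :
    (∑ i, f i ^ 2) - 2 * (∑ i, ∑ j, f i * g j * (A i j * B i j)) + (∑ j, g j ^ 2)
      = (∑ i, ∑ j, (((A i j + B i j) / 2) ^ 2 * (f i - g j) ^ 2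
          + ((A i j - B i j) / 2) ^ 2 * (f i + g j) ^ 2))
        + ((∑ i, f i ^ 2 * (1 - ∑ j, A i j ^ 2)) / 2
          + (∑ j, g j ^ 2 * (1 - ∑ i, A i j ^ 2)) / 2) := by
  have expand : ∑ i, ∑ j, (((A i j + B i j) / 2) ^ 2 * (f i - g j) ^ 2
          + ((A i j - B i j) / 2) ^ 2 * (f i + g j) ^ 2)
      = ((∑ i, ∑ j, A i j ^ 2 * (f i ^ 2 / 2))
        + (∑ i, ∑ j, B i j ^ 2 * (f i ^ 2 / 2)))
        + ((∑ i, ∑ j, A i j ^ 2 * (g j ^ 2 / 2))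
        + (∑ i, ∑ j, B i j ^ 2 * (g j ^ 2 / 2)))
        - 2 * (∑ i, ∑ j, f i * g j * (A i j * B i j)) := by
    simp only [← Finset.sum_add_distrib, ← Finset.sum_sub_distrib, Finset.mul_sum]
    refine Finset.sum_congr rfl fun i _ => Finset.sum_congr rfl fun j _ => ?_
    ring
  have e1 : ∑ i, ∑ j, A i j ^ 2 * (f i ^ 2 / 2) = ∑ i, (∑ j, A i j ^ 2) * (f i ^ 2 / 2) := by
    refine Finset.sum_congr rfl fun i _ => ?_
    rw [Finset.sum_mul]
  have e2 : ∑ i, ∑ j, B i j ^ 2 * (f i ^ 2 / 2) = ∑ i, f i ^ 2 / 2 := by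
    refine Finset.sum_congr rfl fun i _ => ?_
    rw [← Finset.sum_mul, hBrow, one_mul]
  have e3 : ∑ i, ∑ j, A i j ^ 2 * (g j ^ 2 / 2) = ∑ j, (∑ i, A i j ^ 2) * (g j ^ 2 / 2) := by
    rw [Finset.sum_comm]
    refine Finset.sum_congr rfl fun j _ => ?_
    rw [Finset.sum_mul]
  have e4 : ∑ i, ∑ j, B i j ^ 2 * (g j ^ 2 / 2) = ∑ j, g j ^ 2 / 2 := by
    rw [Finset.sum_comm]
    refine Finset.sum_congr rfl fun j _ => ?_
    rw [← Finset.sum_mul, hBcol, one_mul]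
  rw [expand, e1, e2, e3, e4]
  have c1 : (∑ i, (∑ j, A i j ^ 2) * (f i ^ 2 / 2)) + (∑ i, f i ^ 2 / 2)
      + (∑ i, f i ^ 2 * (1 - ∑ j, A i j ^ 2)) / 2 = ∑ i, f i ^ 2 := by
    rw [Finset.sum_div, ← Finset.sum_add_distrib, ← Finset.sum_add_distrib]
    refine Finset.sum_congr rfl fun i _ => ?_
    ring
  have c2 : (∑ j, (∑ i, A i j ^ 2) * (g j ^ 2 / 2)) + (∑ j, g j ^ 2 / 2)
      + (∑ j, g j ^ 2 * (1 - ∑ i, A i j ^ 2)) / 2 = ∑ j, g j ^ 2 := by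
    rw [Finset.sum_div, ← Finset.sum_add_distrib, ← Finset.sum_add_distrib]
    refine Finset.sum_congr rfl fun j _ => ?_
    ring
  linarith [c1, c2]

lemma cos_identity {k : ℕ} (B : Matrix (Fin k) (Fin k) ℝ)
    (hBrow : ∀ i, ∑ j, B i j ^ 2 = 1) (hBcol : ∀ j, ∑ i, B i j ^ 2 = 1)
    (c ct : Fin k → ℝ) :
    (∑ i, c i ^ 2) - 2 * (∑ i, ∑ j, c i * ct j * (B i j * B i j)) + (∑ j, ct j ^ 2)
      = ∑ i, ∑ j, B i j ^ 2 * (c i - ct j) ^ 2 := by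
  have expand : ∑ i, ∑ j, B i j ^ 2 * (c i - ct j) ^ 2
      = ((∑ i, ∑ j, B i j ^ 2 * c i ^ 2) + (∑ i, ∑ j, B i j ^ 2 * ct j ^ 2))
        - 2 * (∑ i, ∑ j, c i * ct j * (B i j * B i j)) := by
    simp only [← Finset.sum_add_distrib, ← Finset.sum_sub_distrib, Finset.mul_sum]
    refine Finset.sum_congr rfl fun i _ => Finset.sum_congr rfl fun j _ => ?_
    ring
  have e1 : ∑ i, ∑ j, B i j ^ 2 * c i ^ 2 = ∑ i, c i ^ 2 := by
    refine Finset.sum_congr rfl fun i _ => ?_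
    rw [← Finset.sum_mul, hBrow, one_mul]
  have e2 : ∑ i, ∑ j, B i j ^ 2 * ct j ^ 2 = ∑ j, ct j ^ 2 := by
    rw [Finset.sum_comm]
    refine Finset.sum_congr rfl fun j _ => ?_
    rw [← Finset.sum_mul, hBcol, one_mul]
  rw [expand, e1, e2]
  ring

lemma scalar_core {k : ℕ} (A B : Matrix (Fin k) (Fin k) ℝ) (d dt : Fin k → ℝ)
    (hBrow : ∀ i, ∑ j, B i j ^ 2 = 1) (hBcol : ∀ j, ∑ i, B i j ^ 2 = 1)
    (hArow : ∀ i, ∑ j, A i j ^ 2 ≤ 1) (hAcol : ∀ j, ∑ i, A i j ^ 2 ≤ 1) :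
    ((∑ i, Real.cos (d i) ^ 2)
        - 2 * (∑ i, ∑ j, Real.cos (d i) * Real.cos (dt j) * (B i j * B i j))
        + (∑ j, Real.cos (dt j) ^ 2))
      + ((∑ i, Real.sin (d i) ^ 2)
        - 2 * (∑ i, ∑ j, Real.sin (d i) * Real.sin (dt j) * (A i j * B i j))
        + (∑ j, Real.sin (dt j) ^ 2))
      ≤ 3 * ((∑ i, d i ^ 2) - 2 * (∑ i, ∑ j, d i * dt j * (A i j * B i j)) + (∑ j, dt j ^ 2)) := by
  rw [cos_identity B hBrow hBcol,
    key_identity A B hBrow hBcol (fun i => Real.sin (d i)) (fun j => Real.sin (dt j)),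
    key_identity A B hBrow hBcol d dt]
  have hRd : 0 ≤ (∑ i, d i ^ 2 * (1 - ∑ j, A i j ^ 2)) / 2
      + (∑ j, dt j ^ 2 * (1 - ∑ i, A i j ^ 2)) / 2 := by
    have h1 : 0 ≤ ∑ i, d i ^ 2 * (1 - ∑ j, A i j ^ 2) :=
      Finset.sum_nonneg fun i _ => mul_nonneg (sq_nonneg _) (by linarith [hArow i])
    have h2 : 0 ≤ ∑ j, dt j ^ 2 * (1 - ∑ i, A i j ^ 2) :=
      Finset.sum_nonneg fun j _ => mul_nonneg (sq_nonneg _) (by linarith [hAcol j])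
    linarith
  have hRem : (∑ i, Real.sin (d i) ^ 2 * (1 - ∑ j, A i j ^ 2)) / 2
        + (∑ j, Real.sin (dt j) ^ 2 * (1 - ∑ i, A i j ^ 2)) / 2
      ≤ (∑ i, d i ^ 2 * (1 - ∑ j, A i j ^ 2)) / 2
        + (∑ j, dt j ^ 2 * (1 - ∑ i, A i j ^ 2)) / 2 := by
    have h1 : ∑ i, Real.sin (d i) ^ 2 * (1 - ∑ j, A i j ^ 2)
        ≤ ∑ i, d i ^ 2 * (1 - ∑ j, A i j ^ 2) :=
      Finset.sum_le_sum fun i _ =>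
        mul_le_mul_of_nonneg_right (sin_sq_le (d i)) (by linarith [hArow i])
    have h2 : ∑ j, Real.sin (dt j) ^ 2 * (1 - ∑ i, A i j ^ 2)
        ≤ ∑ j, dt j ^ 2 * (1 - ∑ i, A i j ^ 2) :=
      Finset.sum_le_sum fun j _ =>
        mul_le_mul_of_nonneg_right (sin_sq_le (dt j)) (by linarith [hAcol j])
    linarith
  have hT : (∑ i, ∑ j, B i j ^ 2 * (Real.cos (d i) - Real.cos (dt j)) ^ 2)
        + (∑ i, ∑ j, (((A i j + B i j) / 2) ^ 2 * (Real.sin (d i) - Real.sin (dt j)) ^ 2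
            + ((A i j - B i j) / 2) ^ 2 * (Real.sin (d i) + Real.sin (dt j)) ^ 2))
      ≤ 3 * ∑ i, ∑ j, (((A i j + B i j) / 2) ^ 2 * (d i - dt j) ^ 2
            + ((A i j - B i j) / 2) ^ 2 * (d i + dt j) ^ 2) := by
    rw [← Finset.sum_add_distrib, Finset.mul_sum]
    refine Finset.sum_le_sum fun i _ => ?_
    rw [← Finset.sum_add_distrib, Finset.mul_sum]
    refine Finset.sum_le_sum fun j _ => ?_
    set p := ((A i j + B i j) / 2) ^ 2 with hp
    set q := ((A i j - B i j) / 2) ^ 2 with hq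
    have hp0 : 0 ≤ p := sq_nonneg _
    have hq0 : 0 ≤ q := sq_nonneg _
    have hB2 : B i j ^ 2 ≤ 2 * p + 2 * q := by
      rw [hp, hq]; nlinarith [sq_nonneg (A i j)]
    have hc1 : (Real.cos (d i) - Real.cos (dt j)) ^ 2 ≤ (d i - dt j) ^ 2 := cos_sub_sq _ _
    have hc2 : (Real.cos (d i) - Real.cos (dt j)) ^ 2 ≤ (d i + dt j) ^ 2 := cos_sub_sq' _ _
    have hs1 : (Real.sin (d i) - Real.sin (dt j)) ^ 2 ≤ (d i - dt j) ^ 2 := sin_sub_sq _ _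
    have hs2 : (Real.sin (d i) + Real.sin (dt j)) ^ 2 ≤ (d i + dt j) ^ 2 := sin_add_sq _ _
    have hcc : 0 ≤ (Real.cos (d i) - Real.cos (dt j)) ^ 2 := sq_nonneg _
    nlinarith [mul_le_mul_of_nonneg_left hc1 hp0, mul_le_mul_of_nonneg_left hc2 hq0,
      mul_le_mul_of_nonneg_left hs1 hp0, mul_le_mul_of_nonneg_left hs2 hq0,
      mul_le_mul_of_nonneg_right hB2 hcc]
  linarith

end Helpers

lemma row_one {k : ℕ} (B : Matrix (Fin k) (Fin k) ℝ) (h : B * Bᵀ = 1) :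
    ∀ i, ∑ j, B i j ^ 2 = 1 := by
  intro i
  have h2 := congrFun (congrFun h i) i
  simp only [Matrix.mul_apply, Matrix.transpose_apply, Matrix.one_apply_eq] at h2
  simpa [sq] using h2

lemma col_one {k : ℕ} (B : Matrix (Fin k) (Fin k) ℝ) (h : Bᵀ * B = 1) :
    ∀ j, ∑ i, B i j ^ 2 = 1 := by
  intro j
  have h2 := congrFun (congrFun h j) j
  simp only [Matrix.mul_apply, Matrix.transpose_apply, Matrix.one_apply_eq] at h2
  simpa [sq] using h2

lemma row_bound {k m : ℕ} (A : Matrix (Fin k) (Fin k) ℝ) (N : Matrix (Fin m) (Fin k) ℝ)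
    (h : 1 - A * Aᵀ = Nᵀ * N) : ∀ i, ∑ j, A i j ^ 2 ≤ 1 := by
  intro i
  have h2 := congrFun (congrFun h i) i
  simp only [Matrix.sub_apply, Matrix.one_apply_eq, Matrix.mul_apply,
    Matrix.transpose_apply] at h2
  have h3 : 0 ≤ ∑ a, N a i * N a i := Finset.sum_nonneg fun a _ => mul_self_nonneg _
  have h4 : ∑ j, A i j * A i j = ∑ j, A i j ^ 2 :=
    Finset.sum_congr rfl fun j _ => (pow_two _).symm
  linarith [h2, h3, h4.symm.le]

lemma proj_lemma {n k : ℕ} (U Ut : Matrix (Fin n) (Fin k) ℝ)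
    (hU : Uᵀ * U = 1) (hUt : Utᵀ * Ut = 1) :
    1 - (Uᵀ * Ut) * (Uᵀ * Ut)ᵀ = ((1 - Ut * Utᵀ) * U)ᵀ * ((1 - Ut * Utᵀ) * U) := by
  have hGsym : (1 - Ut * Utᵀ : Matrix (Fin n) (Fin n) ℝ)ᵀ = 1 - Ut * Utᵀ := by
    rw [Matrix.transpose_sub, Matrix.transpose_one, Matrix.transpose_mul,
      Matrix.transpose_transpose]
  have hUtUt : Ut * Utᵀ * (Ut * Utᵀ) = Ut * Utᵀ := by
    rw [Matrix.mul_assoc Ut Utᵀ (Ut * Utᵀ), ← Matrix.mul_assoc Utᵀ Ut Utᵀ, hUt, Matrix.one_mul]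
  have hGidem : ((1 : Matrix (Fin n) (Fin n) ℝ) - Ut * Utᵀ) * (1 - Ut * Utᵀ)
      = 1 - Ut * Utᵀ := by
    rw [Matrix.sub_mul, Matrix.one_mul, Matrix.mul_sub, Matrix.mul_one, hUtUt]
    abel
  rw [Matrix.transpose_mul Uᵀ Ut, Matrix.transpose_transpose,
    Matrix.transpose_mul (1 - Ut * Utᵀ) U, hGsym,
    Matrix.mul_assoc Uᵀ (1 - Ut * Utᵀ) ((1 - Ut * Utᵀ) * U),
    ← Matrix.mul_assoc (1 - Ut * Utᵀ) (1 - Ut * Utᵀ) U, hGidem,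
    Matrix.sub_mul, Matrix.one_mul, Matrix.mul_sub, hU]
  simp only [Matrix.mul_assoc]


/-- Sensitivity of the Grassmann exponential map.  There is an absolute constant `C > 0`
such that for any base point `V•` with orthonormal columns, any tangent vectors
`Δ, Δ̃` (i.e. `V•ᵀΔ = 0`, `V•ᵀΔ̃ = 0`) with `Δ` of full column rank, and any thin SVDs
`Δ = U ξ Wᵀ`, `Δ̃ = Ũ ξ̃ W̃ᵀ`, the Grassmann exponentials
`V = V• W cos(ξ) Wᵀ + U sin(ξ) Wᵀ` and `Ṽ = V• W̃ cos(ξ̃) W̃ᵀ + Ũ sin(ξ̃) W̃ᵀ` satisfy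
`‖V − Ṽ‖_F ≤ (8C/σ_k(Δ) + 2) ‖Δ − Δ̃‖_F`, where `σ_k(Δ) = min_i ξ_{ii}` is the smallest
singular value of `Δ`. -/
theorem grassmann_exp_sensitivity :
    ∃ C : ℝ, 0 < C ∧
      ∀ (n k : ℕ), 1 ≤ k → k ≤ n →
      ∀ (Vb : Matrix (Fin n) (Fin k) ℝ), Vbᵀ * Vb = 1 →
      ∀ (Δ Δt : Matrix (Fin n) (Fin k) ℝ),
        Vbᵀ * Δ = 0 → Vbᵀ * Δt = 0 →
      ∀ (U Ut : Matrix (Fin n) (Fin k) ℝ) (W Wt : Matrix (Fin k) (Fin k) ℝ)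
        (d dt : Fin k → ℝ),
        Uᵀ * U = 1 → Utᵀ * Ut = 1 →
        Wᵀ * W = 1 → W * Wᵀ = 1 → Wtᵀ * Wt = 1 → Wt * Wtᵀ = 1 →
        (∀ i, 0 ≤ d i) → (∀ i, 0 ≤ dt i) →
        Δ = U * Matrix.diagonal d * Wᵀ →
        Δt = Ut * Matrix.diagonal dt * Wtᵀ →
        0 < (⨅ i : Fin k, d i) →
        frobNorm ((Vb * W * Matrix.diagonal (fun i => Real.cos (d i)) * Wᵀ
              + U * Matrix.diagonal (fun i => Real.sin (d i)) * Wᵀ)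
            - (Vb * Wt * Matrix.diagonal (fun i => Real.cos (dt i)) * Wtᵀ
              + Ut * Matrix.diagonal (fun i => Real.sin (dt i)) * Wtᵀ))
          ≤ (8 * C / (⨅ i : Fin k, d i) + 2) * frobNorm (Δ - Δt) := by
  refine ⟨1, one_pos, ?_⟩
  intro n k hk1 hkn Vb hVb Δ Δt hVΔ hVΔt U Ut W Wt d dt hU hUt hW hW2 hWt hWt2 hd hdt hΔ hΔt hσ
  have hdpos : ∀ j, 0 < d j := fun j =>
    lt_of_lt_of_le hσ (ciInf_le (Set.Finite.bddBelow (Set.finite_range d)) j)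
  -- B facts
  have hBBT : (Wᵀ * Wt) * (Wᵀ * Wt)ᵀ = 1 := by
    rw [Matrix.transpose_mul, Matrix.transpose_transpose, Matrix.mul_assoc Wᵀ Wt (Wtᵀ * W),
      ← Matrix.mul_assoc Wt Wtᵀ W, hWt2, Matrix.one_mul, hW]
  have hBTB : (Wᵀ * Wt)ᵀ * (Wᵀ * Wt) = 1 := by
    rw [Matrix.transpose_mul, Matrix.transpose_transpose, Matrix.mul_assoc Wtᵀ W (Wᵀ * Wt),
      ← Matrix.mul_assoc W Wᵀ Wt, hW2, Matrix.one_mul, hWt]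
  have hBrow := row_one (Wᵀ * Wt) hBBT
  have hBcol := col_one (Wᵀ * Wt) hBTB
  -- A facts
  have hArow := row_bound (Uᵀ * Ut) ((1 - Ut * Utᵀ) * U) (proj_lemma U Ut hU hUt)
  have hAcolAux := row_bound (Utᵀ * U) ((1 - U * Uᵀ) * Ut) (proj_lemma Ut U hUt hU)
  have hAcol : ∀ j, ∑ i, (Uᵀ * Ut) i j ^ 2 ≤ 1 := by
    intro j
    have h := hAcolAux j
    have he : ∀ i, (Uᵀ * Ut) i j = (Utᵀ * U) j i := by
      intro i
      simp [Matrix.mul_apply, Matrix.transpose_apply, mul_comm]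
    calc ∑ i, (Uᵀ * Ut) i j ^ 2 = ∑ i, (Utᵀ * U) j i ^ 2 :=
          Finset.sum_congr rfl fun i _ => by rw [he i]
      _ ≤ 1 := h
  -- Vbᵀ U = 0 and Vbᵀ Ut sin = 0
  have h0 : Vbᵀ * (U * Matrix.diagonal d * Wᵀ) = 0 := by rw [← hΔ]; exact hVΔ
  have h1 : Vbᵀ * U * Matrix.diagonal d = 0 := by
    have key : Vbᵀ * U * Matrix.diagonal d = Vbᵀ * (U * Matrix.diagonal d * Wᵀ) * W := by
      simp only [Matrix.mul_assoc]
      rw [hW, Matrix.mul_one]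
    rw [key, h0, Matrix.zero_mul]
  have hVbU : Vbᵀ * U = 0 := by
    ext i j
    have h2 := congrFun (congrFun h1 i) j
    simp only [Matrix.mul_diagonal, Matrix.zero_apply] at h2 ⊢
    exact (mul_eq_zero.mp h2).resolve_right (ne_of_gt (hdpos j))
  have h0t : Vbᵀ * (Ut * Matrix.diagonal dt * Wtᵀ) = 0 := by rw [← hΔt]; exact hVΔt
  have h1t : Vbᵀ * Ut * Matrix.diagonal dt = 0 := by
    have key : Vbᵀ * Ut * Matrix.diagonal dt = Vbᵀ * (Ut * Matrix.diagonal dt * Wtᵀ) * Wt := by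
      simp only [Matrix.mul_assoc]
      rw [hWt, Matrix.mul_one]
    rw [key, h0t, Matrix.zero_mul]
  have hZsin : Vbᵀ * Ut * Matrix.diagonal (fun i => Real.sin (dt i)) = 0 := by
    ext i j
    have h2 := congrFun (congrFun h1t i) j
    simp only [Matrix.mul_diagonal, Matrix.zero_apply] at h2 ⊢
    rcases eq_or_ne (dt j) 0 with h | h
    · rw [h, Real.sin_zero, mul_zero]
    · rw [(mul_eq_zero.mp h2).resolve_right h, zero_mul]
  -- split
  set P := W * Matrix.diagonal (fun i => Real.cos (d i)) * Wᵀ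
      - Wt * Matrix.diagonal (fun i => Real.cos (dt i)) * Wtᵀ with hPdef
  set Q := U * Matrix.diagonal (fun i => Real.sin (d i)) * Wᵀ
      - Ut * Matrix.diagonal (fun i => Real.sin (dt i)) * Wtᵀ with hQdef
  have hsplit : (Vb * W * Matrix.diagonal (fun i => Real.cos (d i)) * Wᵀ
              + U * Matrix.diagonal (fun i => Real.sin (d i)) * Wᵀ)
            - (Vb * Wt * Matrix.diagonal (fun i => Real.cos (dt i)) * Wtᵀ
              + Ut * Matrix.diagonal (fun i => Real.sin (dt i)) * Wtᵀ)
      = Vb * P + Q := by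
    rw [hPdef, hQdef]
    simp only [Matrix.mul_sub, ← Matrix.mul_assoc]
    abel
  have hVbQ : Vbᵀ * Q = 0 := by
    rw [hQdef, Matrix.mul_sub]
    rw [show Vbᵀ * (U * Matrix.diagonal (fun i => Real.sin (d i)) * Wᵀ)
        = Vbᵀ * U * Matrix.diagonal (fun i => Real.sin (d i)) * Wᵀ by
      simp only [Matrix.mul_assoc]]
    rw [show Vbᵀ * (Ut * Matrix.diagonal (fun i => Real.sin (dt i)) * Wtᵀ)
        = Vbᵀ * Ut * Matrix.diagonal (fun i => Real.sin (dt i)) * Wtᵀ by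
      simp only [Matrix.mul_assoc]]
    rw [hVbU, hZsin, Matrix.zero_mul, Matrix.zero_mul, Matrix.zero_mul, sub_zero]
  have hPyth : Matrix.trace ((Vb * P + Q)ᵀ * (Vb * P + Q))
      = Matrix.trace (Pᵀ * P) + Matrix.trace (Qᵀ * Q) := by
    have e1 : (Vb * P)ᵀ * (Vb * P) = Pᵀ * P := by
      rw [Matrix.transpose_mul, Matrix.mul_assoc, ← Matrix.mul_assoc Vbᵀ Vb P, hVb,
        Matrix.one_mul]
    have e2 : (Vb * P)ᵀ * Q = 0 := by
      rw [Matrix.transpose_mul, Matrix.mul_assoc, hVbQ, Matrix.mul_zero]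
    have e3 : Qᵀ * (Vb * P) = 0 := by
      have h : Qᵀ * (Vb * P) = ((Vb * P)ᵀ * Q)ᵀ := by
        rw [Matrix.transpose_mul, Matrix.transpose_transpose]
      rw [h, e2, Matrix.transpose_zero]
    rw [Matrix.transpose_add, Matrix.add_mul, Matrix.mul_add, Matrix.mul_add, e1, e2, e3]
    simp
  -- expansions
  have hSp : Matrix.trace (Pᵀ * P)
      = (∑ i, Real.cos (d i) ^ 2)
        - 2 * (∑ i, ∑ j, Real.cos (d i) * Real.cos (dt j) * ((Wᵀ * Wt) i j * (Wᵀ * Wt) i j))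
        + (∑ j, Real.cos (dt j) ^ 2) := by
    rw [hPdef, trace_sub_sq, trace_form, trace_form, trace_form, hW, hWt, sum_one_diag,
      sum_one_diag]
    have c1 : ∑ i, Real.cos (d i) * Real.cos (d i) = ∑ i, Real.cos (d i) ^ 2 :=
      Finset.sum_congr rfl fun i _ => (pow_two _).symm
    have c2 : ∑ i, Real.cos (dt i) * Real.cos (dt i) = ∑ i, Real.cos (dt i) ^ 2 :=
      Finset.sum_congr rfl fun i _ => (pow_two _).symm
    rw [c1, c2]
  have hSq : Matrix.trace (Qᵀ * Q)
      = (∑ i, Real.sin (d i) ^ 2)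
        - 2 * (∑ i, ∑ j, Real.sin (d i) * Real.sin (dt j) * ((Uᵀ * Ut) i j * (Wᵀ * Wt) i j))
        + (∑ j, Real.sin (dt j) ^ 2) := by
    rw [hQdef, trace_sub_sq, trace_form, trace_form, trace_form, hU, hW, hUt, hWt,
      sum_one_diag, sum_one_diag]
    have c1 : ∑ i, Real.sin (d i) * Real.sin (d i) = ∑ i, Real.sin (d i) ^ 2 :=
      Finset.sum_congr rfl fun i _ => (pow_two _).symm
    have c2 : ∑ i, Real.sin (dt i) * Real.sin (dt i) = ∑ i, Real.sin (dt i) ^ 2 :=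
      Finset.sum_congr rfl fun i _ => (pow_two _).symm
    rw [c1, c2]
  have hSQ : Matrix.trace ((Δ - Δt)ᵀ * (Δ - Δt))
      = (∑ i, d i ^ 2)
        - 2 * (∑ i, ∑ j, d i * dt j * ((Uᵀ * Ut) i j * (Wᵀ * Wt) i j))
        + (∑ j, dt j ^ 2) := by
    rw [hΔ, hΔt, trace_sub_sq, trace_form, trace_form, trace_form, hU, hW, hUt, hWt,
      sum_one_diag, sum_one_diag]
    have c1 : ∑ i, d i * d i = ∑ i, d i ^ 2 :=
      Finset.sum_congr rfl fun i _ => (pow_two _).symm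
    have c2 : ∑ i, dt i * dt i = ∑ i, dt i ^ 2 :=
      Finset.sum_congr rfl fun i _ => (pow_two _).symm
    rw [c1, c2]
  have hcore := scalar_core (Uᵀ * Ut) (Wᵀ * Wt) d dt hBrow hBcol hArow hAcol
  have hmain : Matrix.trace (Pᵀ * P) + Matrix.trace (Qᵀ * Q)
      ≤ 3 * Matrix.trace ((Δ - Δt)ᵀ * (Δ - Δt)) := by
    rw [hSp, hSq, hSQ]
    exact hcore
  have hSQnn : 0 ≤ Matrix.trace ((Δ - Δt)ᵀ * (Δ - Δt)) := by
    rw [← sum_sq_eq_trace]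
    positivity
  have hfrob : frobNorm ((Vb * W * Matrix.diagonal (fun i => Real.cos (d i)) * Wᵀ
              + U * Matrix.diagonal (fun i => Real.sin (d i)) * Wᵀ)
            - (Vb * Wt * Matrix.diagonal (fun i => Real.cos (dt i)) * Wtᵀ
              + Ut * Matrix.diagonal (fun i => Real.sin (dt i)) * Wtᵀ))
      ≤ 2 * frobNorm (Δ - Δt) := by
    rw [frob_eq_trace, hsplit, hPyth, frob_eq_trace]
    have h4 : Matrix.trace (Pᵀ * P) + Matrix.trace (Qᵀ * Q)
        ≤ 4 * Matrix.trace ((Δ - Δt)ᵀ * (Δ - Δt)) := by linarith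
    calc Real.sqrt (Matrix.trace (Pᵀ * P) + Matrix.trace (Qᵀ * Q))
        ≤ Real.sqrt (4 * Matrix.trace ((Δ - Δt)ᵀ * (Δ - Δt))) := Real.sqrt_le_sqrt h4
      _ = 2 * Real.sqrt (Matrix.trace ((Δ - Δt)ᵀ * (Δ - Δt))) := by
          rw [show (4 : ℝ) = 2 ^ 2 by norm_num, Real.sqrt_mul (by positivity),
            Real.sqrt_sq (by norm_num : (0:ℝ) ≤ 2)]
  refine hfrob.trans ?_
  have hf0 : 0 ≤ frobNorm (Δ - Δt) := Real.sqrt_nonneg _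
  have h8 : 0 ≤ 8 * 1 / (⨅ i : Fin k, d i) := by positivity
  nlinarith [mul_nonneg h8 hf0]
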